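/- Let r₀ > 0, let m be an integer with |m| ≥ 2, and set α = (m² − 2)/2. Let β > α and let J_z : [0,r₀] → ℝ be continuous with |J_z(r)| ≤ C r^β for all r ∈ [0,r₀] and some constant C > 0. Define B_θ(r) = (1/r) ∫₀^r s J_z(s) ds for r ∈ (0,r₀] and p'(r) = −B_θ(r) J_z(r), and suppose B_θ(r) ≠ 0 for all r ∈ (0,r₀] (i.e. B_θ has a sign on (0,r₀]). Then there exists r* ∈ (0,r₀) such that 2 p'(r*) + m² B_θ(r*)² / r* < 0. -/

import Mathlib

open Set MeasureTheory intervalIntegral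

theorem zpinch_instability_criterion_m_ge_two_vanishing_current
    (r₀ : ℝ) (hr₀ : 0 < r₀)
    (m : ℤ) (hm : 2 ≤ |m|)
    (α β C : ℝ) (hα : α = ((m:ℝ) ^ 2 - 2) / 2) (hβ : α < β) (hC : 0 < C)
    (Jz : ℝ → ℝ)
    (hJc : ContinuousOn Jz (Icc (0:ℝ) r₀))
    (hJb : ∀ r ∈ Icc (0:ℝ) r₀, |Jz r| ≤ C * r ^ β)
    (Bθ p' : ℝ → ℝ)
    (hBθ : ∀ r ∈ Ioc (0:ℝ) r₀, Bθ r = (1 / r) * ∫ s in (0:ℝ)..r, s * Jz s)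
    (hp' : ∀ r ∈ Ioc (0:ℝ) r₀, p' r = -(Bθ r * Jz r))
    (hBne : ∀ r ∈ Ioc (0:ℝ) r₀, Bθ r ≠ 0) :
    ∃ r ∈ Ioo (0:ℝ) r₀, 2 * p' r + (m:ℝ) ^ 2 * (Bθ r) ^ 2 / r < 0 := by
  by_contra hcon
  push_neg at hcon
  set c : ℝ := (m:ℝ)^2 with hcdef
  have hm2 : (2:ℝ) ≤ |(m:ℝ)| := by
    calc (2:ℝ) = ((2:ℤ):ℝ) := by norm_num
    _ ≤ ((|m|:ℤ):ℝ) := by exact_mod_cast hm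
    _ = |(m:ℝ)| := by push_cast; ring
  have hm4 : (4:ℝ) ≤ c := by
    have : (4:ℝ) ≤ |(m:ℝ)|^2 := by nlinarith
    simpa [hcdef, sq_abs] using this
  have hβ1 : (1:ℝ) ≤ β := by rw [hα] at hβ; linarith
  have hβ2 : (0:ℝ) < β + 2 := by linarith
  set δ : ℝ := 2*β + 4 - c with hδdef
  have hδ : 0 < δ := by rw [hα] at hβ; simp only [hδdef]; linarith
  set F : ℝ → ℝ := fun r => ∫ s in (0:ℝ)..r, s * Jz s with hFdef
  have hintc : ContinuousOn (fun s => s * Jz s) (Icc (0:ℝ) r₀) :=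
    continuousOn_id.mul hJc
  have hFc : ContinuousOn F (Icc (0:ℝ) r₀) := by
    have h1 : IntegrableOn (fun s => s * Jz s) (uIcc (0:ℝ) r₀) := by
      rw [uIcc_of_le hr₀.le]
      exact hintc.integrableOn_compact isCompact_Icc
    simpa [uIcc_of_le hr₀.le] using intervalIntegral.continuousOn_primitive_interval h1
  have hFd : ∀ a ∈ Ioo (0:ℝ) r₀, HasDerivAt F (a * Jz a) a := by
    intro a ha
    have ha0 : a ≠ 0 := ne_of_gt ha.1
    have hsub : Icc (0:ℝ) a ⊆ Icc (0:ℝ) r₀ := Icc_subset_Icc le_rfl ha.2.le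
    have hint : IntervalIntegrable (fun s => s * Jz s) volume 0 a :=
      ContinuousOn.intervalIntegrable (by rw [uIcc_of_le ha.1.le]; exact hintc.mono hsub)
    have hca : ∀ x ∈ Ioo (0:ℝ) r₀, ContinuousAt (fun s => s * Jz s) x := by
      intro x hx
      exact (hintc.continuousAt (Icc_mem_nhds hx.1 hx.2))
    have hmeas : StronglyMeasurableAtFilter (fun s => s * Jz s) (nhds a) volume :=
      ContinuousAt.stronglyMeasurableAtFilter isOpen_Ioo hca a ha
    exact intervalIntegral.integral_hasDerivAt_right hint hmeas (hca a ha)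
  set g : ℝ → ℝ := fun r => (F r)^2 / r ^ c with hgdef
  have key : ∀ a ∈ Ioo (0:ℝ) r₀, 2 * a^2 * (F a * Jz a) ≤ c * (F a)^2 := by
    intro a ha
    have hapos : 0 < a := ha.1
    have ha0 : a ≠ 0 := ne_of_gt hapos
    have ha3 : (0:ℝ) < a^3 := by positivity
    have h1 : 0 ≤ 2 * p' a + c * (Bθ a)^2 / a := hcon a ha
    have haI : a ∈ Ioc (0:ℝ) r₀ := ⟨ha.1, ha.2.le⟩
    have hrepr : 2 * p' a + c * (Bθ a)^2 / a
        = (c * (F a)^2 - 2 * a^2 * (F a * Jz a)) / a^3 := by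
      rw [hp' a haI, hBθ a haI]
      field_simp
      ring
    rw [hrepr, le_div_iff₀ ha3] at h1
    nlinarith [h1]
  have hderiv : ∀ a ∈ Ioo (0:ℝ) r₀,
      HasDerivAt g ((2 * F a ^ 1 * (a * Jz a) * a ^ c - F a ^ 2 * (c * a ^ (c-1))) / (a ^ c)^2) a := by
    intro a ha
    have ha0 : a ≠ 0 := ne_of_gt ha.1
    have hne : a ^ c ≠ 0 := (Real.rpow_pos_of_pos ha.1 c).ne'
    have h1 : HasDerivAt (fun r => (F r)^2) (2 * F a ^ 1 * (a * Jz a)) a := by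
      simpa using (hFd a ha).fun_pow 2
    have h2 : HasDerivAt (fun r : ℝ => r ^ c) (c * a ^ (c-1)) a :=
      Real.hasDerivAt_rpow_const (Or.inl ha0)
    exact h1.div h2 hne
  have hderiv_nonpos : ∀ a ∈ Ioo (0:ℝ) r₀, deriv g a ≤ 0 := by
    intro a ha
    have ha0 : a ≠ 0 := ne_of_gt ha.1
    rw [(hderiv a ha).deriv]
    apply div_nonpos_of_nonpos_of_nonneg _ (by positivity)
    have hsplit : a ^ c = a ^ (c-1) * a := by
      rw [← Real.rpow_add_one ha0]; ring_nf
    have hpowpos : (0:ℝ) < a ^ (c-1) := Real.rpow_pos_of_pos ha.1 _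
    have h3 := mul_le_mul_of_nonneg_left (key a ha) hpowpos.le
    rw [hsplit]
    nlinarith [h3]
  have hmono : ∀ ε, 0 < ε → ε < r₀ → g r₀ ≤ g ε := by
    intro ε hε hεr
    have hIcc : Icc ε r₀ ⊆ Icc 0 r₀ := Icc_subset_Icc hε.le le_rfl
    have hIoo : Ioo ε r₀ ⊆ Ioo 0 r₀ := Ioo_subset_Ioo hε.le le_rfl
    have hcont : ContinuousOn g (Icc ε r₀) := by
      apply ContinuousOn.div ((hFc.mono hIcc).pow 2)
      · exact continuousOn_id.rpow_const fun x hx => Or.inr (by linarith [hm4])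
      · intro x hx
        exact (Real.rpow_pos_of_pos (lt_of_lt_of_le hε hx.1) c).ne'
    have hdiff : DifferentiableOn ℝ g (interior (Icc ε r₀)) := by
      rw [interior_Icc]
      intro x hx
      exact ((hderiv x (hIoo hx)).differentiableAt).differentiableWithinAt
    have hanti : AntitoneOn g (Icc ε r₀) := by
      apply antitoneOn_of_deriv_nonpos (convex_Icc ε r₀) hcont hdiff
      intro x hx
      rw [interior_Icc] at hx
      exact hderiv_nonpos x (hIoo hx)
    exact hanti (left_mem_Icc.2 hεr.le) (right_mem_Icc.2 hεr.le) hεr.le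
  have hF0 : F r₀ ≠ 0 := by
    intro h0
    apply hBne r₀ ⟨hr₀, le_rfl⟩
    rw [hBθ r₀ ⟨hr₀, le_rfl⟩,
      show (∫ s in (0:ℝ)..r₀, s * Jz s) = F r₀ from rfl, h0, mul_zero]
  have hgr₀ : 0 < g r₀ := by
    have h1 : (0:ℝ) < r₀ ^ c := Real.rpow_pos_of_pos hr₀ c
    have h2 : 0 < (F r₀)^2 := by positivity
    exact div_pos h2 h1
  have hFb : ∀ ε ∈ Ioc (0:ℝ) r₀, |F ε| ≤ C * ε ^ (β+2) / (β+2) := by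
    intro ε hε
    have hsub : Icc (0:ℝ) ε ⊆ Icc (0:ℝ) r₀ := Icc_subset_Icc le_rfl hε.2
    have hint : IntervalIntegrable (fun s => s * Jz s) volume 0 ε :=
      ContinuousOn.intervalIntegrable (by rw [uIcc_of_le hε.1.le]; exact hintc.mono hsub)
    have hint2 : IntervalIntegrable (fun s : ℝ => C * s ^ (β+1)) volume 0 ε :=
      (intervalIntegrable_rpow' (by linarith)).const_mul C
    have hptw : ∀ s ∈ Icc (0:ℝ) ε, |s * Jz s| ≤ C * s ^ (β+1) := by
      intro s hs
      rcases eq_or_lt_of_le hs.1 with rfl | hs0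
      · simp [Real.zero_rpow (by linarith : β + 1 ≠ 0)]
      · have h1 : |s * Jz s| = s * |Jz s| := by
          rw [abs_mul, abs_of_nonneg hs.1]
        rw [h1]
        calc s * |Jz s| ≤ s * (C * s ^ β) :=
              mul_le_mul_of_nonneg_left (hJb s (hsub hs)) hs.1
        _ = C * s ^ (β+1) := by rw [Real.rpow_add_one (ne_of_gt hs0)]; ring
    calc |F ε| ≤ ∫ s in (0:ℝ)..ε, |s * Jz s| :=
          intervalIntegral.abs_integral_le_integral_abs hε.1.le
    _ ≤ ∫ s in (0:ℝ)..ε, C * s ^ (β+1) :=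
          intervalIntegral.integral_mono_on hε.1.le hint.abs hint2 hptw
    _ = C * ε ^ (β+2) / (β+2) := by
          rw [intervalIntegral.integral_const_mul,
            integral_rpow (Or.inl (by linarith : (-1:ℝ) < β+1)),
            show β + 1 + 1 = β + 2 from by ring,
            Real.zero_rpow (by linarith : β + 2 ≠ 0)]
          ring
  have gbound : ∀ ε ∈ Ioo (0:ℝ) r₀, g ε ≤ (C/(β+2))^2 * ε ^ δ := by
    intro ε hε
    have hεpos : 0 < ε := hε.1
    have hεc : 0 < ε ^ c := Real.rpow_pos_of_pos hεpos c
    have hsq : F ε^2 ≤ (C * ε ^ (β+2)/(β+2))^2 := by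
      rw [← sq_abs]
      exact pow_le_pow_left₀ (abs_nonneg _) (hFb ε ⟨hε.1, hε.2.le⟩) 2
    have e0 : (C * ε ^ (β+2)/(β+2))^2 / ε ^ c = (C/(β+2))^2 * ε ^ δ := by
      have e1 : (ε ^ (β+2))^(2:ℕ) = ε ^ (2*β+4) := by
        rw [← Real.rpow_natCast (ε ^ (β+2)) 2, ← Real.rpow_mul hεpos.le]
        congr 1
        push_cast
        ring
      have e2 : ε ^ (2*β+4) / ε ^ c = ε ^ δ := by
        rw [← Real.rpow_sub hεpos]
      rw [div_pow, mul_pow, e1, ← e2]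
      field_simp
    calc g ε ≤ (C * ε ^ (β+2)/(β+2))^2 / ε ^ c := by
          exact div_le_div_of_nonneg_right hsq hεc.le
    _ = (C/(β+2))^2 * ε ^ δ := e0
  set K : ℝ := (C/(β+2))^2 with hK
  have hKpos : 0 < K := by positivity
  set t : ℝ := (g r₀/(2*K)) ^ δ⁻¹ with ht
  have htpos : 0 < t := Real.rpow_pos_of_pos (by positivity) _
  set ε := min (r₀/2) t with hε
  have hεpos : 0 < ε := lt_min (by linarith) htpos
  have hεlt : ε < r₀ := lt_of_le_of_lt (min_le_left _ _) (by linarith)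
  have h1 := hmono ε hεpos hεlt
  have h2 : g ε ≤ K * ε ^ δ := gbound ε ⟨hεpos, hεlt⟩
  have h3 : ε ^ δ ≤ g r₀/(2*K) := by
    have h := Real.rpow_le_rpow hεpos.le (min_le_right (r₀/2) t) hδ.le
    rwa [ht, Real.rpow_inv_rpow (by positivity) hδ.ne'] at h
  have h4 : K * ε ^ δ ≤ g r₀/2 := by
    calc K * ε ^ δ ≤ K * (g r₀/(2*K)) := mul_le_mul_of_nonneg_left h3 hKpos.le
    _ = g r₀/2 := by field_simp
  linarith
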